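/- Fix 0 < q < 1, n ∈ ℕ, a, b, c, d, t ∈ ℂ and θ ∈ ℝ, with |t| < 1, |tc| < 1, |td| < 1, and suppose (aq;q)_k ≠ 0, (tc;q)_k ≠ 0, (td;q)_k ≠ 0 for all 0 ≤ k ≤ n. Then the series ∑_{k=0}^{∞} (t^k/(q;q)_k)·p_n(q^k; a, b; q)·Q_k(cos θ; c, d | q) converges absolutely, and its sum equals ((tc;q)_∞ (td;q)_∞/((te^{iθ};q)_∞ (te^{−iθ};q)_∞)) · ∑_{k=0}^{n} ((q^{−n};q)_k (abq^{n+1};q)_k (te^{iθ};q)_k (te^{−iθ};q)_k)/((aq;q)_k (tc;q)_k (td;q)_k (q;q)_k) · q^k. -/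

import Mathlib

/-- Complex q-shifted factorial `(a;q)_k = ∏_{j=0}^{k-1} (1 - a q^j)`. -/
noncomputable def qPochC (q a : ℂ) (k : ℕ) : ℂ := ∏ j ∈ Finset.range k, (1 - a * q ^ j)

/-- Complex infinite q-shifted factorial `(a;q)_∞ = ∏_{j=0}^{∞} (1 - a q^j)`. -/
noncomputable def qPochInfC (q a : ℂ) : ℂ := ∏' j : ℕ, (1 - a * q ^ j)

/-- Little q-Jacobi polynomial
`p_n(x;a,b;q) = ∑_{k=0}^{n} ((q^{−n};q)_k (abq^{n+1};q)_k)/((aq;q)_k (q;q)_k) (qx)^k`. -/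
noncomputable def littleqJacobiC (q a b : ℂ) (n : ℕ) (x : ℂ) : ℂ :=
  ∑ k ∈ Finset.range (n + 1),
    qPochC q (q ^ (-(n : ℤ))) k * qPochC q (a * b * q ^ (n + 1)) k /
      (qPochC q (a * q) k * qPochC q q k) * (q * x) ^ k

/-- Al-Salam–Chihara polynomials, defined by `Q_0 = 1`, `Q_1 = 2x − (c+d)` and the
recurrence `2x Q_k = Q_{k+1} + (c+d)q^k Q_k + (1−q^k)(1−cdq^{k−1}) Q_{k−1}`. -/
noncomputable def alSalamChiharaC (q c d x : ℂ) : ℕ → ℂ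
  | 0 => 1
  | 1 => 2 * x - (c + d)
  | (k + 2) => (2 * x - (c + d) * q ^ (k + 1)) * alSalamChiharaC q c d x (k + 1)
      - (1 - q ^ (k + 1)) * (1 - c * d * q ^ k) * alSalamChiharaC q c d x k

open Complex Finset Filter Topology

/-- compatibility: the complex absolute value as a bundled absolute value -/
noncomputable def Complex.abs : AbsoluteValue ℂ ℝ :=
  IsAbsoluteValue.toAbsoluteValue (norm : ℂ → ℝ)

lemma Complex.norm_eq_abs (z : ℂ) : ‖z‖ = Complex.abs z := rfl

@[simp]
lemma Complex.abs_ofReal (r : ℝ) : Complex.abs (r : ℂ) = |r| := by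
  show ‖(r : ℂ)‖ = |r|
  simp

lemma Complex.continuous_abs : Continuous Complex.abs := continuous_norm

lemma Complex.abs_exp_ofReal_mul_I (x : ℝ) : Complex.abs (Complex.exp (x * Complex.I)) = 1 :=
  Complex.norm_exp_ofReal_mul_I x

namespace QGF

variable {q : ℝ}

lemma qPoch_succ (Q a : ℂ) (k : ℕ) : qPochC Q a (k+1) = qPochC Q a k * (1 - a * Q^k) :=
  Finset.prod_range_succ _ _

lemma qPoch_zero (Q a : ℂ) : qPochC Q a 0 = 1 := rfl

variable {q : ℝ}

lemma absQ (hq : 0 < q) : Complex.abs (q:ℂ) = q := by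
  rw [Complex.abs_ofReal, abs_of_pos hq]

lemma sum_geo_le (hq : 0 < q) (hq1 : q < 1) (k : ℕ) :
    ∑ j ∈ Finset.range k, q^j ≤ (1-q)⁻¹ := by
  have h := Summable.sum_le_tsum (Finset.range k) (fun i _ => pow_nonneg hq.le i)
    (summable_geometric_of_lt_one hq.le hq1)
  rwa [tsum_geometric_of_lt_one hq.le hq1] at h

lemma one_sub_ge_exp {x : ℝ} (h0 : 0 ≤ x) (h1 : x < 1) :
    Real.exp (-(x * (1-x)⁻¹)) ≤ 1 - x := by
  have hx : (0:ℝ) < 1 - x := by linarith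
  have h2 : (1 - x)⁻¹ ≤ Real.exp (x * (1-x)⁻¹) := by
    have h3 := Real.add_one_le_exp (x * (1-x)⁻¹)
    have h4 : (1-x)⁻¹ = 1 + x * (1-x)⁻¹ := by field_simp; ring
    linarith
  rw [Real.exp_neg, inv_le_comm₀ (Real.exp_pos _) hx]
  exact h2

lemma qPoch_abs_le (hq : 0 < q) (hq1 : q < 1) (a : ℂ) (k : ℕ) :
    Complex.abs (qPochC (q:ℂ) a k) ≤ Real.exp (Complex.abs a * (1-q)⁻¹) := by
  rw [qPochC, map_prod]
  calc ∏ j ∈ Finset.range k, Complex.abs (1 - a * (q:ℂ)^j)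
      ≤ ∏ j ∈ Finset.range k, Real.exp (Complex.abs a * q^j) := by
        apply Finset.prod_le_prod (fun j _ => AbsoluteValue.nonneg _ _)
        intro j _
        calc Complex.abs (1 - a * (q:ℂ)^j) ≤ 1 + Complex.abs a * q^j := by
              refine le_trans (AbsoluteValue.sub_le_add _ _ _) ?_
              simp [map_mul, map_pow, absQ hq, abs_of_pos hq]
        _ ≤ Real.exp (Complex.abs a * q^j) := by
              have := Real.add_one_le_exp (Complex.abs a * q^j); linarith
    _ = Real.exp (∑ j ∈ Finset.range k, Complex.abs a * q^j) := (Real.exp_sum _ _).symm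
    _ ≤ Real.exp (Complex.abs a * (1-q)⁻¹) := by
        apply Real.exp_le_exp.2
        rw [← Finset.mul_sum]
        have hs := sum_geo_le hq hq1 k
        have ha := AbsoluteValue.nonneg Complex.abs a
        nlinarith

lemma qPoch_abs_ge (hq : 0 < q) (hq1 : q < 1) {a : ℂ} (ha : Complex.abs a < 1) (k : ℕ) :
    Real.exp (-(Complex.abs a * (1-q)⁻¹ * (1 - Complex.abs a)⁻¹))
      ≤ Complex.abs (qPochC (q:ℂ) a k) := by
  have ha0 := AbsoluteValue.nonneg Complex.abs a
  have hia : (0:ℝ) < 1 - Complex.abs a := by linarith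
  rw [qPochC, map_prod]
  have hterm : ∀ j ∈ Finset.range k,
      Real.exp (-(Complex.abs a * q^j * (1 - Complex.abs a)⁻¹))
        ≤ Complex.abs (1 - a * (q:ℂ)^j) := by
    intro j _
    have hqj0 : (0:ℝ) ≤ q^j := pow_nonneg hq.le j
    have hqj1 : q^j ≤ 1 := pow_le_one₀ hq.le hq1.le
    have habs : Complex.abs (a * (q:ℂ)^j) = Complex.abs a * q^j := by
      simp [map_mul, map_pow, absQ hq]
    have hlt : Complex.abs a * q^j < 1 := by nlinarith
    have h1 : 1 - Complex.abs a * q^j ≤ Complex.abs (1 - a * (q:ℂ)^j) := by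
      have := norm_sub_norm_le (1 : ℂ) (a * (q:ℂ)^j)
      simpa [Complex.norm_eq_abs, habs, abs_of_pos hq] using this
    refine le_trans ?_ h1
    refine le_trans ?_ (one_sub_ge_exp (by positivity) hlt)
    apply Real.exp_le_exp.2
    rw [neg_le_neg_iff]
    have hmono : (1 - Complex.abs a * q^j)⁻¹ ≤ (1 - Complex.abs a)⁻¹ := by
      apply inv_anti₀ hia
      nlinarith
    have h0 : (0:ℝ) ≤ Complex.abs a * q^j := by positivity
    calc Complex.abs a * q^j * (1 - Complex.abs a * q^j)⁻¹
        ≤ Complex.abs a * q^j * (1 - Complex.abs a)⁻¹ := by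
          apply mul_le_mul_of_nonneg_left hmono h0
      _ = Complex.abs a * q^j * (1 - Complex.abs a)⁻¹ := rfl
  calc Real.exp (-(Complex.abs a * (1-q)⁻¹ * (1 - Complex.abs a)⁻¹))
      ≤ ∏ j ∈ Finset.range k, Real.exp (-(Complex.abs a * q^j * (1 - Complex.abs a)⁻¹)) := by
        rw [← Real.exp_sum]
        apply Real.exp_le_exp.2
        have hsum : ∑ j ∈ Finset.range k, Complex.abs a * q ^ j * (1 - Complex.abs a)⁻¹
            ≤ Complex.abs a * (1-q)⁻¹ * (1 - Complex.abs a)⁻¹ := by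
          have hs := sum_geo_le hq hq1 k
          have h1 : ∑ j ∈ Finset.range k, Complex.abs a * q ^ j * (1 - Complex.abs a)⁻¹
              = (Complex.abs a * ∑ j ∈ Finset.range k, q ^ j) * (1 - Complex.abs a)⁻¹ := by
            rw [Finset.mul_sum, Finset.sum_mul]
          rw [h1]
          apply mul_le_mul_of_nonneg_right ?_ (inv_nonneg.2 hia.le)
          exact mul_le_mul_of_nonneg_left hs ha0
        have h2 : ∑ j ∈ Finset.range k, -(Complex.abs a * q ^ j * (1 - Complex.abs a)⁻¹)
            = -∑ j ∈ Finset.range k, (Complex.abs a * q ^ j * (1 - Complex.abs a)⁻¹) := by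
          simp
        rw [h2]
        exact neg_le_neg hsum
    _ ≤ ∏ j ∈ Finset.range k, Complex.abs (1 - a * (q:ℂ)^j) := by
        apply Finset.prod_le_prod (fun j _ => (Real.exp_pos _).le) hterm


lemma abs_term (hq : 0 < q) (a : ℂ) (j : ℕ) :
    Complex.abs (a * (q:ℂ)^j) = Complex.abs a * q^j := by
  simp [map_mul, map_pow, absQ hq, abs_of_pos hq]

lemma term_abs_lt (hq : 0 < q) (hq1 : q < 1) {a : ℂ} (ha : Complex.abs a < 1) (j : ℕ) :
    Complex.abs (a * (q:ℂ)^j) < 1 := by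
  rw [abs_term hq]
  have h1 : q ^ j ≤ 1 := pow_le_one₀ hq.le hq1.le
  have h0 : (0:ℝ) ≤ q ^ j := pow_nonneg hq.le j
  nlinarith [AbsoluteValue.nonneg Complex.abs a]

lemma term_ne_zero (hq : 0 < q) (hq1 : q < 1) {a : ℂ} (ha : Complex.abs a < 1) (j : ℕ) :
    (1 : ℂ) - a * (q:ℂ)^j ≠ 0 := by
  intro h
  have h2 : a * (q:ℂ)^j = 1 := by linear_combination -h
  have := term_abs_lt hq hq1 ha j
  rw [h2] at this; simp at this

lemma qPoch_ne_zero (hq : 0 < q) (hq1 : q < 1) {a : ℂ} (ha : Complex.abs a < 1) (k : ℕ) :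
    qPochC (q:ℂ) a k ≠ 0 :=
  Finset.prod_ne_zero_iff.2 fun j _ => term_ne_zero hq hq1 ha j

lemma qfac_multipliable (hq : 0 < q) (hq1 : q < 1) {a : ℂ} (ha : Complex.abs a < 1) :
    Multipliable (fun j : ℕ => 1 - a * (q:ℂ)^j) := by
  have := Complex.multipliable_of_summable_log (f := fun j : ℕ => 1 - a * (q:ℂ)^j) ?_
  · exact this
  have key : ∀ j : ℕ, ‖Complex.log (1 - a * (q:ℂ)^j)‖
      ≤ ((1 - Complex.abs a)⁻¹ / 2 + 1) * (Complex.abs a * q^j) := by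
    intro j
    have hz : ‖-(a * (q:ℂ)^j)‖ < 1 := by
      rw [norm_neg, Complex.norm_eq_abs]; exact term_abs_lt hq hq1 ha j
    have h1 : (1 : ℂ) - a * (q:ℂ)^j = 1 + -(a * (q:ℂ)^j) := by ring
    rw [h1]
    refine le_trans (Complex.norm_log_one_add_le hz) ?_
    have habs : ‖-(a * (q:ℂ)^j)‖ = Complex.abs a * q^j := by
      rw [norm_neg, Complex.norm_eq_abs, abs_term hq]
    rw [habs]
    have ha0 := AbsoluteValue.nonneg Complex.abs a
    have hqj0 : (0:ℝ) ≤ q ^ j := pow_nonneg hq.le j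
    have hqj1 : q ^ j ≤ 1 := pow_le_one₀ hq.le hq1.le
    have hle : Complex.abs a * q ^ j ≤ Complex.abs a := by nlinarith
    have hia : (0:ℝ) < 1 - Complex.abs a := by linarith
    have hinv : (1 - Complex.abs a * q^j)⁻¹ ≤ (1 - Complex.abs a)⁻¹ := by
      apply inv_anti₀ hia; linarith
    have hx1 : Complex.abs a * q ^ j ≤ 1 := by nlinarith
    have hx0 : (0:ℝ) ≤ Complex.abs a * q ^ j := by positivity
    have hsq : (Complex.abs a * q^j)^2 ≤ Complex.abs a * q^j := by
      nlinarith [mul_le_mul_of_nonneg_left hx1 hx0]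
    have h2 : (Complex.abs a * q ^ j) ^ 2 * (1 - Complex.abs a * q ^ j)⁻¹ / 2
        ≤ (Complex.abs a * q ^ j) * (1 - Complex.abs a)⁻¹ / 2 := by
      have h0 : (0:ℝ) ≤ Complex.abs a * q^j := by positivity
      have h3 : (Complex.abs a * q ^ j) ^ 2 * (1 - Complex.abs a * q ^ j)⁻¹
          ≤ (Complex.abs a * q ^ j) * (1 - Complex.abs a)⁻¹ := by
        calc (Complex.abs a * q ^ j) ^ 2 * (1 - Complex.abs a * q ^ j)⁻¹
            ≤ (Complex.abs a * q ^ j) * (1 - Complex.abs a * q ^ j)⁻¹ := by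
              apply mul_le_mul_of_nonneg_right hsq
              apply inv_nonneg.2; nlinarith [term_abs_lt hq hq1 ha j, abs_term hq a j]
          _ ≤ (Complex.abs a * q ^ j) * (1 - Complex.abs a)⁻¹ :=
              mul_le_mul_of_nonneg_left hinv h0
      linarith
    calc (Complex.abs a * q ^ j)^2 * (1 - Complex.abs a * q ^ j)⁻¹ / 2 + Complex.abs a * q ^ j
        ≤ (Complex.abs a * q ^ j) * (1 - Complex.abs a)⁻¹ / 2 + Complex.abs a * q ^ j := by
          linarith
      _ = ((1 - Complex.abs a)⁻¹ / 2 + 1) * (Complex.abs a * q^j) := by ring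
  apply Summable.of_norm_bounded ?_ key
  apply Summable.mul_left
  apply Summable.mul_left
  exact summable_geometric_of_lt_one hq.le hq1

lemma qfac_hasProd (hq : 0 < q) (hq1 : q < 1) {a : ℂ} (ha : Complex.abs a < 1) :
    HasProd (fun j : ℕ => 1 - a * (q:ℂ)^j) (qPochInfC (q:ℂ) a) :=
  (qfac_multipliable hq hq1 ha).hasProd

lemma qPoch_tendsto (hq : 0 < q) (hq1 : q < 1) {a : ℂ} (ha : Complex.abs a < 1) :
    Tendsto (fun N => qPochC (q:ℂ) a N) atTop (𝓝 (qPochInfC (q:ℂ) a)) :=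
  (qfac_hasProd hq hq1 ha).tendsto_prod_nat

lemma qPochInf_shift (hq : 0 < q) (hq1 : q < 1) {a : ℂ} (ha : Complex.abs a < 1) (m : ℕ) :
    qPochInfC (q:ℂ) a = qPochC (q:ℂ) a m * qPochInfC (q:ℂ) (a * (q:ℂ)^m) := by
  have ham : Complex.abs (a * (q:ℂ)^m) < 1 := term_abs_lt hq hq1 ha m
  have h1 : Tendsto (fun N => qPochC (q:ℂ) a (m + N)) atTop (𝓝 (qPochInfC (q:ℂ) a)) := by
    have := (qPoch_tendsto hq hq1 ha).comp (tendsto_add_atTop_nat m)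
    have heq : ((fun N => qPochC (q:ℂ) a N) ∘ (fun N => N + m)) = fun N => qPochC (q:ℂ) a (m + N) := by
      funext N; simp [Nat.add_comm]
    rwa [heq] at this
  have h2 : ∀ N, qPochC (q:ℂ) a (m + N) = qPochC (q:ℂ) a m * qPochC (q:ℂ) (a * (q:ℂ)^m) N := by
    intro N
    rw [qPochC, qPochC, qPochC, Finset.prod_range_add]
    congr 1
    apply Finset.prod_congr rfl
    intro i _
    rw [pow_add]; ring
  have h3 : Tendsto (fun N => qPochC (q:ℂ) a m * qPochC (q:ℂ) (a * (q:ℂ)^m) N) atTop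
      (𝓝 (qPochC (q:ℂ) a m * qPochInfC (q:ℂ) (a * (q:ℂ)^m))) :=
    (qPoch_tendsto hq hq1 ham).const_mul _
  rw [funext h2] at h1
  exact tendsto_nhds_unique h1 h3


lemma qPochInf_abs_ge (hq : 0 < q) (hq1 : q < 1) {a : ℂ} (ha : Complex.abs a < 1) :
    Real.exp (-(Complex.abs a * (1-q)⁻¹ * (1 - Complex.abs a)⁻¹))
      ≤ Complex.abs (qPochInfC (q:ℂ) a) := by
  have h1 : Tendsto (fun N => Complex.abs (qPochC (q:ℂ) a N)) atTop
      (𝓝 (Complex.abs (qPochInfC (q:ℂ) a))) :=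
    (Complex.continuous_abs.tendsto _).comp (qPoch_tendsto hq hq1 ha)
  exact ge_of_tendsto h1 (Eventually.of_forall fun N => qPoch_abs_ge hq hq1 ha N)

lemma qPochInf_ne_zero (hq : 0 < q) (hq1 : q < 1) {a : ℂ} (ha : Complex.abs a < 1) :
    qPochInfC (q:ℂ) a ≠ 0 := by
  intro h
  have := qPochInf_abs_ge hq hq1 ha
  rw [h] at this
  simp at this
  exact absurd this (not_le.2 (Real.exp_pos _))


/-- coefficients of the q-binomial series -/
noncomputable def qc (Q α : ℂ) (k : ℕ) : ℂ := qPochC Q α k / qPochC Q Q k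

/-- the q-binomial series -/
noncomputable def qb (Q α z : ℂ) : ℂ := ∑' k : ℕ, qc Q α k * z^k

/-- uniform bound for the coefficients -/
noncomputable def CC (q : ℝ) (α : ℂ) : ℝ :=
  Real.exp (Complex.abs α * (1-q)⁻¹) * Real.exp (q * (1-q)⁻¹ * (1-q)⁻¹)

lemma CC_pos (q : ℝ) (α : ℂ) : 0 < CC q α := by
  unfold CC; positivity

lemma habsQlt (hq : 0 < q) (hq1 : q < 1) : Complex.abs (q:ℂ) < 1 := by
  rw [absQ hq]; exact hq1

lemma qPochQ_ne_zero (hq : 0 < q) (hq1 : q < 1) (k : ℕ) : qPochC (q:ℂ) (q:ℂ) k ≠ 0 :=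
  qPoch_ne_zero hq hq1 (habsQlt hq hq1) k

lemma qc_abs_le (hq : 0 < q) (hq1 : q < 1) (α : ℂ) (k : ℕ) :
    Complex.abs (qc (q:ℂ) α k) ≤ CC q α := by
  have hd := qPoch_abs_ge hq hq1 (habsQlt hq hq1) k
  rw [absQ hq] at hd
  have hd0 : (0:ℝ) < Real.exp (-(q * (1-q)⁻¹ * (1-q)⁻¹)) := Real.exp_pos _
  have hnum := qPoch_abs_le hq hq1 α k
  rw [qc, map_div₀, div_le_iff₀ (lt_of_lt_of_le hd0 hd)]
  calc Complex.abs (qPochC (q:ℂ) α k) ≤ Real.exp (Complex.abs α * (1-q)⁻¹) := hnum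
    _ = CC q α * Real.exp (-(q * (1-q)⁻¹ * (1-q)⁻¹)) := by
        rw [CC, mul_assoc, ← Real.exp_add, add_neg_cancel, Real.exp_zero, mul_one]
    _ ≤ CC q α * Complex.abs (qPochC (q:ℂ) (q:ℂ) k) :=
        mul_le_mul_of_nonneg_left hd (CC_pos q α).le

lemma qc_summable_norm (hq : 0 < q) (hq1 : q < 1) (α : ℂ) {z : ℂ}
    (hz : Complex.abs z < 1) : Summable (fun k : ℕ => ‖qc (q:ℂ) α k * z^k‖) := by
  have hf : Summable (fun k : ℕ => CC q α * Complex.abs z ^ k) :=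
    (summable_geometric_of_lt_one (AbsoluteValue.nonneg _ _) hz).mul_left _
  refine Summable.of_nonneg_of_le (fun k => norm_nonneg _) (fun k => ?_) hf
  rw [norm_mul, norm_pow, Complex.norm_eq_abs, Complex.norm_eq_abs]
  exact mul_le_mul_of_nonneg_right (qc_abs_le hq hq1 α k) (by positivity)

lemma qc_summable (hq : 0 < q) (hq1 : q < 1) (α : ℂ) {z : ℂ}
    (hz : Complex.abs z < 1) : Summable (fun k : ℕ => qc (q:ℂ) α k * z^k) :=
  (qc_summable_norm hq hq1 α hz).of_norm

lemma qc_ratio (hq : 0 < q) (hq1 : q < 1) (α : ℂ) (k : ℕ) :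
    (1 - (q:ℂ)^(k+1)) * qc (q:ℂ) α (k+1) = (1 - α*(q:ℂ)^k) * qc (q:ℂ) α k := by
  have h1 := qPochQ_ne_zero hq hq1 k
  have h2 := qPochQ_ne_zero hq hq1 (k+1)
  rw [qc, qc, qPoch_succ (q:ℂ) α k]
  have h3 : qPochC (q:ℂ) (q:ℂ) (k+1) = qPochC (q:ℂ) (q:ℂ) k * (1 - (q:ℂ)^(k+1)) := by
    rw [qPoch_succ (q:ℂ) (q:ℂ) k, ← pow_succ']
  rw [h3]
  have hqk : (1 : ℂ) - (q:ℂ)^(k+1) ≠ 0 := by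
    intro h
    have h4 : Complex.abs ((q:ℂ)^(k+1)) < 1 := by
      rw [map_pow, absQ hq]
      exact pow_lt_one₀ hq.le hq1 (Nat.succ_ne_zero k)
    have h5 : (q:ℂ)^(k+1) = 1 := by linear_combination -h
    rw [h5] at h4; simp at h4
  field_simp

lemma qb_funceq (hq : 0 < q) (hq1 : q < 1) (α : ℂ) {z : ℂ} (hz : Complex.abs z < 1) :
    (1 - z) * qb (q:ℂ) α z = (1 - α*z) * qb (q:ℂ) α ((q:ℂ)*z) := by
  have hqz : Complex.abs ((q:ℂ)*z) < 1 := by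
    rw [map_mul, absQ hq]
    nlinarith [AbsoluteValue.nonneg Complex.abs z]
  have sf := qc_summable hq hq1 α hz
  have sg := qc_summable hq hq1 α hqz
  set f : ℕ → ℂ := fun k => qc (q:ℂ) α k * z^k with hf
  set g : ℕ → ℂ := fun k => qc (q:ℂ) α k * ((q:ℂ)*z)^k with hg
  have hA : (∑' k, f k) - (∑' k, g k) = ∑' k, (1 - (q:ℂ)^k) * (qc (q:ℂ) α k * z^k) := by
    rw [← Summable.tsum_sub sf sg]
    apply tsum_congr
    intro k
    simp only [hf, hg]
    rw [mul_pow]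
    ring
  have hB : z * (∑' k, f k) - α * z * (∑' k, g k)
      = ∑' k, (1 - α*(q:ℂ)^k) * (qc (q:ℂ) α k * z^(k+1)) := by
    rw [← tsum_mul_left, ← tsum_mul_left, ← Summable.tsum_sub (sf.mul_left z) (sg.mul_left (α*z))]
    apply tsum_congr
    intro k
    simp only [hf, hg]
    rw [mul_pow]
    ring
  have hS : (∑' k, (1 - (q:ℂ)^k) * (qc (q:ℂ) α k * z^k))
      = ∑' k, (1 - α*(q:ℂ)^k) * (qc (q:ℂ) α k * z^(k+1)) := by
    have hsum : Summable (fun k => (1 - (q:ℂ)^k) * (qc (q:ℂ) α k * z^k)) := by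
      have : (fun k => (1 - (q:ℂ)^k) * (qc (q:ℂ) α k * z^k)) = fun k => f k - g k := by
        funext k; simp only [hf, hg]; rw [mul_pow]; ring
      rw [this]; exact sf.sub sg
    rw [Summable.tsum_eq_zero_add hsum]
    simp only [pow_zero, sub_self, zero_mul, zero_add]
    apply tsum_congr
    intro k
    rw [← mul_assoc, qc_ratio hq hq1 α k, mul_assoc]
  have e1 : (∑' k, f k) = qb (q:ℂ) α z := rfl
  have e2 : (∑' k, g k) = qb (q:ℂ) α ((q:ℂ)*z) := rfl
  rw [← e1, ← e2]
  linear_combination hA - hB + hS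

lemma qb_iterate (hq : 0 < q) (hq1 : q < 1) (α : ℂ) {z : ℂ} (hz : Complex.abs z < 1) (N : ℕ) :
    qb (q:ℂ) α z * qPochC (q:ℂ) z N = qPochC (q:ℂ) (α*z) N * qb (q:ℂ) α ((q:ℂ)^N * z) := by
  induction N with
  | zero => simp [qPoch_zero]
  | succ N ih =>
    have hzN : Complex.abs ((q:ℂ)^N * z) < 1 := by
      rw [map_mul, map_pow, absQ hq]
      have h1 : q ^ N ≤ 1 := pow_le_one₀ hq.le hq1.le
      have h0 : (0:ℝ) ≤ q ^ N := pow_nonneg hq.le N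
      nlinarith [AbsoluteValue.nonneg Complex.abs z]
    have hfe := qb_funceq hq hq1 α hzN
    rw [qPoch_succ, qPoch_succ, ← mul_assoc, ih]
    have e1 : (q:ℂ) * ((q:ℂ)^N * z) = (q:ℂ)^(N+1) * z := by ring
    have e2 : α * ((q:ℂ)^N * z) = α * z * (q:ℂ)^N := by ring
    rw [e1, e2] at hfe
    calc qPochC (q:ℂ) (α*z) N * qb (q:ℂ) α ((q:ℂ)^N * z) * (1 - z * (q:ℂ)^N)
        = qPochC (q:ℂ) (α*z) N * ((1 - (q:ℂ)^N * z) * qb (q:ℂ) α ((q:ℂ)^N * z)) := by ring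
      _ = qPochC (q:ℂ) (α*z) N * ((1 - α * z * (q:ℂ)^N) * qb (q:ℂ) α ((q:ℂ)^(N+1) * z)) := by
          rw [hfe]
      _ = qPochC (q:ℂ) (α*z) N * (1 - α * z * (q:ℂ)^N) * qb (q:ℂ) α ((q:ℂ)^(N+1) * z) := by
          ring

lemma qb_sub_one (hq : 0 < q) (hq1 : q < 1) (α : ℂ) {w : ℂ} (hw : Complex.abs w < 1) :
    Complex.abs (qb (q:ℂ) α w - 1) ≤ CC q α * Complex.abs w * (1 - Complex.abs w)⁻¹ := by
  have hsum := qc_summable hq hq1 α hw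
  have h0 : qc (q:ℂ) α 0 * w^0 = 1 := by
    rw [qc, qPoch_zero, qPoch_zero]; simp
  have h1 : qb (q:ℂ) α w - 1 = ∑' k, qc (q:ℂ) α (k+1) * w^(k+1) := by
    rw [qb, Summable.tsum_eq_zero_add hsum, h0]; ring
  rw [h1]
  have hb : ∀ k : ℕ, ‖qc (q:ℂ) α (k+1) * w^(k+1)‖ ≤ CC q α * Complex.abs w * Complex.abs w ^ k := by
    intro k
    rw [norm_mul, norm_pow, Complex.norm_eq_abs, Complex.norm_eq_abs, pow_succ]
    calc Complex.abs (qc (q:ℂ) α (k+1)) * (Complex.abs w ^ k * Complex.abs w)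
        ≤ CC q α * (Complex.abs w ^ k * Complex.abs w) := by
          apply mul_le_mul_of_nonneg_right (qc_abs_le hq hq1 α (k+1)) (by positivity)
      _ = CC q α * Complex.abs w * Complex.abs w ^ k := by ring
  have hsumgeo : Summable (fun k : ℕ => CC q α * Complex.abs w * Complex.abs w ^ k) :=
    (summable_geometric_of_lt_one (AbsoluteValue.nonneg _ _) hw).mul_left _
  calc Complex.abs (∑' k, qc (q:ℂ) α (k+1) * w^(k+1))
      ≤ ∑' k, CC q α * Complex.abs w * Complex.abs w ^ k := by
        rw [← Complex.norm_eq_abs]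
        exact norm_tsum_le_tsum_norm ((hsumgeo.of_nonneg_of_le (fun k => norm_nonneg _) hb))
          |>.trans (Summable.tsum_le_tsum hb (hsumgeo.of_nonneg_of_le (fun k => norm_nonneg _) hb) hsumgeo)
    _ = CC q α * Complex.abs w * (1 - Complex.abs w)⁻¹ := by
        rw [tsum_mul_left, tsum_geometric_of_lt_one (AbsoluteValue.nonneg _ _) hw]

lemma qb_tendsto_one (hq : 0 < q) (hq1 : q < 1) (α : ℂ) {z : ℂ} (hz : Complex.abs z < 1) :
    Tendsto (fun N => qb (q:ℂ) α ((q:ℂ)^N * z)) atTop (𝓝 1) := by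
  rw [← tendsto_sub_nhds_zero_iff]
  have key : ∀ N : ℕ, ‖qb (q:ℂ) α ((q:ℂ)^N * z) - 1‖
      ≤ CC q α * (1 - Complex.abs z)⁻¹ * q ^ N := by
    intro N
    have hwN : Complex.abs ((q:ℂ)^N * z) = q^N * Complex.abs z := by
      rw [map_mul, map_pow, absQ hq]
    have h1 : q ^ N ≤ 1 := pow_le_one₀ hq.le hq1.le
    have h0 : (0:ℝ) ≤ q ^ N := pow_nonneg hq.le N
    have haz := AbsoluteValue.nonneg Complex.abs z
    have hlt : Complex.abs ((q:ℂ)^N * z) < 1 := by rw [hwN]; nlinarith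
    have hle : Complex.abs ((q:ℂ)^N * z) ≤ Complex.abs z := by rw [hwN]; nlinarith
    have hb := qb_sub_one hq hq1 α hlt
    rw [Complex.norm_eq_abs]
    refine le_trans hb ?_
    have hinv : (1 - Complex.abs ((q:ℂ)^N * z))⁻¹ ≤ (1 - Complex.abs z)⁻¹ := by
      apply inv_anti₀ (by linarith) (by linarith)
    calc CC q α * Complex.abs ((q:ℂ)^N * z) * (1 - Complex.abs ((q:ℂ)^N * z))⁻¹
        ≤ CC q α * Complex.abs ((q:ℂ)^N * z) * (1 - Complex.abs z)⁻¹ := by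
          exact mul_le_mul_of_nonneg_left hinv
            (mul_nonneg (CC_pos q α).le (AbsoluteValue.nonneg _ _))
      _ = CC q α * (1 - Complex.abs z)⁻¹ * (q^N * Complex.abs z) := by rw [hwN]; ring
      _ ≤ CC q α * (1 - Complex.abs z)⁻¹ * q^N := by
          have : q^N * Complex.abs z ≤ q^N * 1 := by nlinarith
          have hc : 0 ≤ CC q α * (1 - Complex.abs z)⁻¹ := by
            have := CC_pos q α
            have : (0:ℝ) ≤ (1 - Complex.abs z)⁻¹ := by
              apply inv_nonneg.2; linarith
            positivity
          nlinarith
  have hg : Tendsto (fun N : ℕ => CC q α * (1 - Complex.abs z)⁻¹ * q ^ N) atTop (𝓝 0) := by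
    have h := (tendsto_pow_atTop_nhds_zero_of_lt_one hq.le hq1).const_mul
      (CC q α * (1 - Complex.abs z)⁻¹)
    simpa using h
  exact squeeze_zero_norm key hg

theorem qb_eq (hq : 0 < q) (hq1 : q < 1) {α z : ℂ} (hz : Complex.abs z < 1)
    (haz : Complex.abs (α * z) < 1) :
    qb (q:ℂ) α z * qPochInfC (q:ℂ) z = qPochInfC (q:ℂ) (α*z) := by
  have h1 : Tendsto (fun N => qb (q:ℂ) α z * qPochC (q:ℂ) z N) atTop
      (𝓝 (qb (q:ℂ) α z * qPochInfC (q:ℂ) z)) :=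
    (qPoch_tendsto hq hq1 hz).const_mul _
  have h2 : Tendsto (fun N => qPochC (q:ℂ) (α*z) N * qb (q:ℂ) α ((q:ℂ)^N * z)) atTop
      (𝓝 (qPochInfC (q:ℂ) (α*z) * 1)) :=
    (qPoch_tendsto hq hq1 haz).mul (qb_tendsto_one hq hq1 α hz)
  rw [mul_one] at h2
  have h3 : (fun N => qb (q:ℂ) α z * qPochC (q:ℂ) z N)
      = fun N => qPochC (q:ℂ) (α*z) N * qb (q:ℂ) α ((q:ℂ)^N * z) := by
    funext N; exact qb_iterate hq hq1 α hz N
  rw [h3] at h1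
  exact tendsto_nhds_unique h1 h2


section PS
open PowerSeries

lemma one_sub_qpow_ne_zero (hq : 0 < q) (hq1 : q < 1) (m : ℕ) :
    (1 : ℂ) - (q:ℂ)^(m+1) ≠ 0 := by
  intro h
  have h4 : Complex.abs ((q:ℂ)^(m+1)) < 1 := by
    rw [map_pow, absQ hq]
    exact pow_lt_one₀ hq.le hq1 (Nat.succ_ne_zero m)
  have h5 : (q:ℂ)^(m+1) = 1 := by linear_combination -h
  rw [h5] at h4; simp at h4

-- coefficient helpers
lemma coeff_one_sub_C_mul_zero (α : ℂ) (F : PowerSeries ℂ) :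
    coeff 0 ((1 - C α * X) * F) = coeff 0 F := by
  rw [sub_mul, one_mul, map_sub, mul_assoc, coeff_C_mul, coeff_zero_X_mul]
  simp

lemma coeff_one_sub_C_mul_succ (α : ℂ) (F : PowerSeries ℂ) (n : ℕ) :
    coeff (n+1) ((1 - C α * X) * F) = coeff (n+1) F - α * coeff n F := by
  rw [sub_mul, one_mul, map_sub, mul_assoc, coeff_C_mul, coeff_succ_X_mul]

section ASC
variable (hq : 0 < q) (hq1 : q < 1) (c d e eb x : ℂ)
  (he : e * eb = 1) (hx : e + eb = 2 * x)

/-- coefficients of the two q-binomial factors -/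
noncomputable def Af (Q cc ee : ℂ) (k : ℕ) : ℂ := qc Q cc k * ee^k

lemma Af_ratio (hq : 0 < q) (hq1 : q < 1) (cc ee : ℂ) (k : ℕ) :
    (1 - (q:ℂ)^(k+1)) * Af (q:ℂ) cc ee (k+1) = (ee - cc * ee * (q:ℂ)^k) * Af (q:ℂ) cc ee k := by
  have h := qc_ratio hq hq1 cc k
  unfold Af
  calc (1 - (q:ℂ)^(k+1)) * (qc (q:ℂ) cc (k+1) * ee^(k+1))
      = ((1 - (q:ℂ)^(k+1)) * qc (q:ℂ) cc (k+1)) * ee^(k+1) := by ring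
    _ = ((1 - cc*(q:ℂ)^k) * qc (q:ℂ) cc k) * ee^(k+1) := by rw [h]
    _ = (ee - cc * ee * (q:ℂ)^k) * (qc (q:ℂ) cc k * ee^k) := by rw [pow_succ]; ring

/-- power series relation for a factor -/
lemma factor_relation (hq : 0 < q) (hq1 : q < 1) (cc ee : ℂ) :
    (1 - C ee * X) * PowerSeries.mk (Af (q:ℂ) cc ee)
      = (1 - C (cc * ee) * X) * rescale (q:ℂ) (PowerSeries.mk (Af (q:ℂ) cc ee)) := by
  ext n
  cases n with
  | zero =>
    rw [coeff_one_sub_C_mul_zero, coeff_one_sub_C_mul_zero, coeff_rescale, pow_zero, one_mul]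
  | succ n =>
    rw [coeff_one_sub_C_mul_succ, coeff_one_sub_C_mul_succ, coeff_rescale, coeff_rescale,
      coeff_mk, coeff_mk]
    linear_combination Af_ratio hq hq1 cc ee n

/-- normalized AS-Chihara -/
noncomputable def uu (Q c d x : ℂ) (k : ℕ) : ℂ := alSalamChiharaC Q c d x k / qPochC Q Q k

lemma uu_zero (Q c d x : ℂ) : uu Q c d x 0 = 1 := by
  unfold uu alSalamChiharaC
  rw [qPoch_zero]; simp

lemma uu_relation (hq : 0 < q) (hq1 : q < 1) (c d e eb x : ℂ)
    (he : e * eb = 1) (hx : e + eb = 2 * x) :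
    (1 - C e * X) * ((1 - C eb * X) * PowerSeries.mk (uu (q:ℂ) c d x))
      = (1 - C c * X) * ((1 - C d * X) * rescale (q:ℂ) (PowerSeries.mk (uu (q:ℂ) c d x))) := by
  have hrec : ∀ n : ℕ, (1 - (q:ℂ)^(n+2)) * uu (q:ℂ) c d x (n+2)
      = (2*x - (c+d)*(q:ℂ)^(n+1)) * uu (q:ℂ) c d x (n+1)
        - (1 - c*d*(q:ℂ)^n) * uu (q:ℂ) c d x n := by
    intro n
    have h1 := qPochQ_ne_zero hq hq1 n
    have h2 := qPochQ_ne_zero hq hq1 (n+1)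
    have h3 := qPochQ_ne_zero hq hq1 (n+2)
    have e2 : qPochC (q:ℂ) (q:ℂ) (n+1) = qPochC (q:ℂ) (q:ℂ) n * (1 - (q:ℂ)^(n+1)) := by
      rw [qPoch_succ, ← pow_succ']
    have e3 : qPochC (q:ℂ) (q:ℂ) (n+2) = qPochC (q:ℂ) (q:ℂ) (n+1) * (1 - (q:ℂ)^(n+2)) := by
      rw [qPoch_succ, ← pow_succ']
    have hdef : alSalamChiharaC (q:ℂ) c d x (n+2)
        = (2*x - (c+d)*(q:ℂ)^(n+1)) * alSalamChiharaC (q:ℂ) c d x (n+1)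
          - (1 - (q:ℂ)^(n+1)) * (1 - c*d*(q:ℂ)^n) * alSalamChiharaC (q:ℂ) c d x n := rfl
    have hz1 : (1:ℂ) - (q:ℂ)^(n+1) ≠ 0 := one_sub_qpow_ne_zero hq hq1 n
    have hz2 : (1:ℂ) - (q:ℂ)^(n+2) ≠ 0 := one_sub_qpow_ne_zero hq hq1 (n+1)
    unfold uu
    rw [hdef, e3, e2]
    field_simp
  have hu1 : (1 - (q:ℂ)) * uu (q:ℂ) c d x 1 = (2*x - (c+d)) * uu (q:ℂ) c d x 0 := by
    have hz : (1:ℂ) - (q:ℂ) ≠ 0 := by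
      have := one_sub_qpow_ne_zero hq hq1 0
      rwa [pow_one] at this
    have e1 : qPochC (q:ℂ) (q:ℂ) 1 = 1 - (q:ℂ) := by
      rw [qPoch_succ, qPoch_zero]; simp
    rw [uu_zero]
    unfold uu alSalamChiharaC
    rw [e1]
    field_simp
  ext n
  rcases n with _ | _ | n
  · simp only [coeff_one_sub_C_mul_zero, coeff_rescale, coeff_mk, pow_zero, one_mul]
  · simp only [coeff_one_sub_C_mul_succ, coeff_one_sub_C_mul_zero, coeff_rescale, coeff_mk,
      pow_one, pow_zero, one_mul]
    linear_combination hu1 - uu (q:ℂ) c d x 0 * hx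
  · simp only [coeff_one_sub_C_mul_succ, coeff_one_sub_C_mul_zero, coeff_rescale, coeff_mk]
    linear_combination hrec n - uu (q:ℂ) c d x (n+1) * hx + uu (q:ℂ) c d x n * he

lemma ps_unique (hq : 0 < q) (hq1 : q < 1) (c d e eb x : ℂ)
    (W : PowerSeries ℂ)
    (hW : (1 - C e * X) * ((1 - C eb * X) * W)
      = (1 - C c * X) * ((1 - C d * X) * rescale (q:ℂ) W))
    (h0 : coeff 0 W = 0) : ∀ n, coeff n W = 0 := by
  intro n
  induction n using Nat.strong_induction_on with
  | _ n ih =>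
    rcases n with _ | _ | n
    · exact h0
    · have h := congrArg (coeff 1) hW
      simp only [coeff_one_sub_C_mul_succ, coeff_one_sub_C_mul_zero, coeff_rescale,
        pow_one, pow_zero, one_mul] at h
      have hz : (1:ℂ) - (q:ℂ) ≠ 0 := by
        have := one_sub_qpow_ne_zero hq hq1 0
        rwa [pow_one] at this
      rw [h0] at h
      have h2 : ((1:ℂ) - (q:ℂ)) * coeff 1 W = 0 := by
        linear_combination h
      rcases mul_eq_zero.1 h2 with h3 | h3
      · exact absurd h3 hz
      · exact h3
    · have h := congrArg (coeff (n+2)) hW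
      simp only [coeff_one_sub_C_mul_succ, coeff_one_sub_C_mul_zero, coeff_rescale] at h
      have i1 : coeff (n+1) W = 0 := ih (n+1) (by omega)
      have i0 : coeff n W = 0 := ih n (by omega)
      have hz : (1:ℂ) - (q:ℂ)^(n+2) ≠ 0 := one_sub_qpow_ne_zero hq hq1 (n+1)
      have h2 : ((1:ℂ) - (q:ℂ)^(n+2)) * coeff (n+2) W = 0 := by
        rw [i1, i0] at h
        linear_combination h
      rcases mul_eq_zero.1 h2 with h3 | h3
      · exact absurd h3 hz
      · exact h3

theorem asc_convolution (hq : 0 < q) (hq1 : q < 1) (c d e eb x : ℂ)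
    (he : e * eb = 1) (hx : e + eb = 2 * x) (n : ℕ) :
    uu (q:ℂ) c d x n
      = ∑ k ∈ Finset.range (n+1), Af (q:ℂ) (c*eb) e k * Af (q:ℂ) (d*e) eb (n-k) := by
  set UA := PowerSeries.mk (Af (q:ℂ) (c*eb) e) with hUA
  set UB := PowerSeries.mk (Af (q:ℂ) (d*e) eb) with hUB
  set U := PowerSeries.mk (uu (q:ℂ) c d x) with hU
  have hA := factor_relation hq hq1 (c*eb) e
  have hB := factor_relation hq hq1 (d*e) eb
  have hce : c * eb * e = c := by
    calc c * eb * e = c * (e * eb) := by ring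
      _ = c := by rw [he]; ring
  have hde : d * e * eb = d := by
    calc d * e * eb = d * (e * eb) := by ring
      _ = d := by rw [he]; ring
  rw [hce] at hA
  rw [hde] at hB
  have hP : (1 - C e * X) * ((1 - C eb * X) * (UA * UB))
      = (1 - C c * X) * ((1 - C d * X) * rescale (q:ℂ) (UA * UB)) := by
    rw [map_mul]
    calc (1 - C e * X) * ((1 - C eb * X) * (UA * UB))
        = ((1 - C e * X) * UA) * ((1 - C eb * X) * UB) := by ring
      _ = ((1 - C c * X) * rescale (q:ℂ) UA) * ((1 - C d * X) * rescale (q:ℂ) UB) := by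
          rw [hA, hB]
      _ = (1 - C c * X) * ((1 - C d * X) * (rescale (q:ℂ) UA * rescale (q:ℂ) UB)) := by
          ring
  have hUrel := uu_relation hq hq1 c d e eb x he hx
  have hW : (1 - C e * X) * ((1 - C eb * X) * (U - UA * UB))
      = (1 - C c * X) * ((1 - C d * X) * rescale (q:ℂ) (U - UA * UB)) := by
    rw [map_sub]
    linear_combination hUrel - hP
  have h0 : coeff 0 (U - UA * UB) = 0 := by
    rw [map_sub, hU, hUA, hUB]
    rw [PowerSeries.coeff_zero_eq_constantCoeff, map_mul]
    simp only [← PowerSeries.coeff_zero_eq_constantCoeff, coeff_mk]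
    rw [uu_zero]
    unfold Af qc
    simp [qPoch_zero]
  have hz := ps_unique hq hq1 c d e eb x (U - UA * UB) hW h0 n
  rw [map_sub, sub_eq_zero] at hz
  rw [hU, coeff_mk] at hz
  rw [hz, PowerSeries.coeff_mul]
  rw [Finset.Nat.sum_antidiagonal_eq_sum_range_succ_mk]
  apply Finset.sum_congr rfl
  intro k _
  rw [hUA, hUB, coeff_mk, coeff_mk]

end ASC

end PS

section ASC2
variable (hq : 0 < q) (hq1 : q < 1)

lemma Af_abs_le (hq : 0 < q) (hq1 : q < 1) (cc : ℂ) {ee : ℂ} (hee : Complex.abs ee = 1)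
    (k : ℕ) : Complex.abs (Af (q:ℂ) cc ee k) ≤ CC q cc := by
  rw [Af, map_mul, map_pow, hee, one_pow, mul_one]
  exact qc_abs_le hq hq1 cc k

lemma uu_abs_le (hq : 0 < q) (hq1 : q < 1) (c d e eb x : ℂ)
    (he : e * eb = 1) (hx : e + eb = 2 * x)
    (hee : Complex.abs e = 1) (heb : Complex.abs eb = 1) (k : ℕ) :
    Complex.abs (uu (q:ℂ) c d x k) ≤ (k+1) * (CC q (c*eb) * CC q (d*e)) := by
  rw [asc_convolution hq hq1 c d e eb x he hx k]
  calc Complex.abs (∑ i ∈ Finset.range (k+1), Af (q:ℂ) (c*eb) e i * Af (q:ℂ) (d*e) eb (k-i))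
      ≤ ∑ i ∈ Finset.range (k+1),
          Complex.abs (Af (q:ℂ) (c*eb) e i * Af (q:ℂ) (d*e) eb (k-i)) := by
        simpa [Complex.norm_eq_abs] using norm_sum_le (Finset.range (k+1))
          (fun i => Af (q:ℂ) (c*eb) e i * Af (q:ℂ) (d*e) eb (k-i))
    _ ≤ ∑ i ∈ Finset.range (k+1), CC q (c*eb) * CC q (d*e) := by
        apply Finset.sum_le_sum
        intro i _
        rw [map_mul]
        exact mul_le_mul (Af_abs_le hq hq1 (c*eb) hee i) (Af_abs_le hq hq1 (d*e) heb (k-i))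
          (AbsoluteValue.nonneg _ _) (CC_pos q (c*eb)).le
    _ = (k+1) * (CC q (c*eb) * CC q (d*e)) := by
        rw [Finset.sum_const, Finset.card_range]
        push_cast
        ring

lemma summable_kp1_geom {r : ℝ} (hr0 : 0 ≤ r) (hr : r < 1) :
    Summable (fun k : ℕ => ((k:ℝ)+1) * r^k) := by
  have h1 : Summable (fun k : ℕ => (k:ℝ) * r^k) := by
    have := summable_pow_mul_geometric_of_norm_lt_one (R := ℝ) 1 (by rwa [Real.norm_eq_abs, _root_.abs_of_nonneg hr0])
    simpa using this
  have h2 : Summable (fun k : ℕ => r^k) := summable_geometric_of_lt_one hr0 hr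
  have := h1.add h2
  apply this.congr
  intro k
  ring

lemma uu_summable_norm (hq : 0 < q) (hq1 : q < 1) (c d e eb x : ℂ)
    (he : e * eb = 1) (hx : e + eb = 2 * x)
    (hee : Complex.abs e = 1) (heb : Complex.abs eb = 1) {s : ℂ}
    (hs : Complex.abs s < 1) :
    Summable (fun k : ℕ => ‖uu (q:ℂ) c d x k * s^k‖) := by
  have hM := CC_pos q (c*eb)
  have hM2 := CC_pos q (d*e)
  have hgs : Summable (fun k : ℕ => (CC q (c*eb) * CC q (d*e)) * (((k:ℝ)+1) * Complex.abs s ^ k)) :=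
    (summable_kp1_geom (AbsoluteValue.nonneg _ _) hs).mul_left _
  refine Summable.of_nonneg_of_le (fun k => norm_nonneg _) (fun k => ?_) hgs
  rw [norm_mul, norm_pow, Complex.norm_eq_abs, Complex.norm_eq_abs]
  calc Complex.abs (uu (q:ℂ) c d x k) * Complex.abs s ^ k
      ≤ ((k:ℝ)+1) * (CC q (c*eb) * CC q (d*e)) * Complex.abs s ^ k := by
        apply mul_le_mul_of_nonneg_right
          (by exact_mod_cast uu_abs_le hq hq1 c d e eb x he hx hee heb k) (by positivity)
    _ = (CC q (c*eb) * CC q (d*e)) * (((k:ℝ)+1) * Complex.abs s ^ k) := by ring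

/-- Generating function of AS-Chihara (product form). -/
theorem asc_gf (hq : 0 < q) (hq1 : q < 1) (c d e eb x : ℂ)
    (he : e * eb = 1) (hx : e + eb = 2 * x)
    (hee : Complex.abs e = 1) (heb : Complex.abs eb = 1) {s : ℂ}
    (hs : Complex.abs s < 1) :
    (∑' k : ℕ, uu (q:ℂ) c d x k * s^k) = qb (q:ℂ) (c*eb) (s*e) * qb (q:ℂ) (d*e) (s*eb) := by
  have hse : Complex.abs (s*e) < 1 := by rw [map_mul, hee, mul_one]; exact hs
  have hseb : Complex.abs (s*eb) < 1 := by rw [map_mul, heb, mul_one]; exact hs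
  have hf : Summable (fun k : ℕ => ‖Af (q:ℂ) (c*eb) e k * s^k‖) := by
    have := qc_summable_norm hq hq1 (c*eb) hse
    apply this.congr
    intro k
    rw [Af]
    congr 1
    rw [mul_pow]
    ring
  have hg : Summable (fun k : ℕ => ‖Af (q:ℂ) (d*e) eb k * s^k‖) := by
    have := qc_summable_norm hq hq1 (d*e) hseb
    apply this.congr
    intro k
    rw [Af]
    congr 1
    rw [mul_pow]
    ring
  have e1 : qb (q:ℂ) (c*eb) (s*e) = ∑' k : ℕ, Af (q:ℂ) (c*eb) e k * s^k := by
    rw [qb]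
    apply tsum_congr
    intro k
    rw [Af, mul_pow]
    ring
  have e2 : qb (q:ℂ) (d*e) (s*eb) = ∑' k : ℕ, Af (q:ℂ) (d*e) eb k * s^k := by
    rw [qb]
    apply tsum_congr
    intro k
    rw [Af, mul_pow]
    ring
  rw [e1, e2, tsum_mul_tsum_eq_tsum_sum_range_of_summable_norm hf hg]
  apply tsum_congr
  intro k
  rw [asc_convolution hq hq1 c d e eb x he hx k, Finset.sum_mul]
  apply Finset.sum_congr rfl
  intro i hi
  have hik : i ≤ k := Nat.lt_succ_iff.1 (Finset.mem_range.1 hi)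
  have : s^i * s^(k-i) = s^k := by
    rw [← pow_add, Nat.add_sub_cancel' hik]
  calc Af (q:ℂ) (c*eb) e i * Af (q:ℂ) (d*e) eb (k-i) * s^k
      = Af (q:ℂ) (c*eb) e i * Af (q:ℂ) (d*e) eb (k-i) * (s^i * s^(k-i)) := by rw [this]
    _ = Af (q:ℂ) (c*eb) e i * s^i * (Af (q:ℂ) (d*e) eb (k-i) * s^(k-i)) := by ring

end ASC2

end QGF

set_option maxHeartbeats 2000000 in
open QGF Complex Finset Filter Topology in
/-- The generating-function identity: `∑_{k=0}^{∞} (t^k/(q;q)_k) p_n(q^k;a,b;q)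
Q_k(cos θ;c,d|q)` converges absolutely and equals the terminating ₄φ₃ series times
`(tc;q)_∞ (td;q)_∞ / ((te^{iθ};q)_∞ (te^{−iθ};q)_∞)`. -/
theorem stmt_10 (q : ℝ) (hq : 0 < q) (hq1 : q < 1) (n : ℕ) (a b c d t : ℂ) (θ : ℝ)
    (ht : ‖t‖ < 1) (htc : ‖t * c‖ < 1)
    (htd : ‖t * d‖ < 1)
    (haq : ∀ k ≤ n, qPochC (q : ℂ) (a * (q : ℂ)) k ≠ 0)
    (htc' : ∀ k ≤ n, qPochC (q : ℂ) (t * c) k ≠ 0)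
    (htd' : ∀ k ≤ n, qPochC (q : ℂ) (t * d) k ≠ 0) :
    Summable (fun k : ℕ => ‖
      (t ^ k / qPochC (q : ℂ) (q : ℂ) k * littleqJacobiC (q : ℂ) a b n ((q : ℂ) ^ k)
        * alSalamChiharaC (q : ℂ) c d ((Real.cos θ : ℝ) : ℂ) k)‖) ∧
    (∑' k : ℕ, t ^ k / qPochC (q : ℂ) (q : ℂ) k * littleqJacobiC (q : ℂ) a b n ((q : ℂ) ^ k)
        * alSalamChiharaC (q : ℂ) c d ((Real.cos θ : ℝ) : ℂ) k)
      = qPochInfC (q : ℂ) (t * c) * qPochInfC (q : ℂ) (t * d)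
          / (qPochInfC (q : ℂ) (t * Complex.exp ((θ : ℂ) * Complex.I))
              * qPochInfC (q : ℂ) (t * Complex.exp (-(θ : ℂ) * Complex.I)))
        * ∑ k ∈ Finset.range (n + 1),
            qPochC (q : ℂ) ((q : ℂ) ^ (-(n : ℤ))) k
              * qPochC (q : ℂ) (a * b * (q : ℂ) ^ (n + 1)) k
              * qPochC (q : ℂ) (t * Complex.exp ((θ : ℂ) * Complex.I)) k
              * qPochC (q : ℂ) (t * Complex.exp (-(θ : ℂ) * Complex.I)) k
              / (qPochC (q : ℂ) (a * (q : ℂ)) k * qPochC (q : ℂ) (t * c) k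
                  * qPochC (q : ℂ) (t * d) k * qPochC (q : ℂ) (q : ℂ) k)
              * (q : ℂ) ^ k := by
  set Q : ℂ := (q : ℂ) with hQ
  set e : ℂ := Complex.exp ((θ : ℂ) * Complex.I) with hedef
  set eb : ℂ := Complex.exp (-(θ : ℂ) * Complex.I) with hebdef
  set x : ℂ := ((Real.cos θ : ℝ) : ℂ) with hxdef
  have he : e * eb = 1 := by
    rw [hedef, hebdef, ← Complex.exp_add,
      show (θ:ℂ)*Complex.I + -(θ:ℂ)*Complex.I = 0 by ring, Complex.exp_zero]
  have hx : e + eb = 2 * x := by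
    have h1 : e = Complex.cos (θ:ℂ) + Complex.sin (θ:ℂ) * Complex.I := by
      rw [hedef, Complex.exp_mul_I]
    have h2 : eb = Complex.cos (-(θ:ℂ)) + Complex.sin (-(θ:ℂ)) * Complex.I := by
      rw [hebdef, ← Complex.exp_mul_I]
    rw [h1, h2, Complex.cos_neg, Complex.sin_neg, hxdef, Complex.ofReal_cos]
    ring
  have hee : Complex.abs e = 1 := by
    rw [hedef]
    have : (θ:ℂ) * Complex.I = ((θ:ℝ):ℂ) * Complex.I := rfl
    exact Complex.abs_exp_ofReal_mul_I θ
  have heb : Complex.abs eb = 1 := by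
    rw [hebdef]
    have h3 : -(θ:ℂ) * Complex.I = ((-θ:ℝ):ℂ) * Complex.I := by push_cast; ring
    rw [h3]
    exact Complex.abs_exp_ofReal_mul_I (-θ)
  -- little q-Jacobi coefficients
  set R : ℕ → ℂ := fun j => qPochC Q (Q ^ (-(n : ℤ))) j * qPochC Q (a * b * Q ^ (n + 1)) j /
      (qPochC Q (a * Q) j * qPochC Q Q j) with hR
  set w : ℕ → ℂ := fun j => t * Q^j with hw
  have habsw : ∀ j : ℕ, Complex.abs (w j) ≤ Complex.abs t := by
    intro j
    rw [hw]
    simp only []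
    rw [abs_term hq]
    have h1 : q ^ j ≤ 1 := pow_le_one₀ hq.le hq1.le
    nlinarith [AbsoluteValue.nonneg Complex.abs t, pow_nonneg hq.le j]
  have hwlt : ∀ j : ℕ, Complex.abs (w j) < 1 := fun j => lt_of_le_of_lt (habsw j) ht
  -- the term-by-term finite decomposition
  have gterm : ∀ k : ℕ, t ^ k / qPochC Q Q k * littleqJacobiC Q a b n (Q ^ k)
        * alSalamChiharaC Q c d x k
      = ∑ j ∈ Finset.range (n+1), (R j * Q^j) * (uu Q c d x k * (w j)^k) := by
    intro k
    rw [littleqJacobiC]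
    rw [Finset.mul_sum, Finset.sum_mul]
    apply Finset.sum_congr rfl
    intro j _
    have hP := qPochQ_ne_zero hq hq1 k
    rw [uu, hw]
    have h1 : (Q * Q^k)^j = Q^j * (Q^j)^k := by
      rw [mul_pow, ← pow_mul, ← pow_mul, mul_comm k j]
    have h2 : (t * Q^j)^k = t^k * (Q^j)^k := mul_pow _ _ _
    rw [h1, h2]
    ring
  -- summability of each piece
  have hGsum : ∀ j, Summable (fun k => (R j * Q^j) * (uu Q c d x k * (w j)^k)) := by
    intro j
    exact ((uu_summable_norm hq hq1 c d e eb x he hx hee heb (hwlt j)).of_norm).mul_left _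
  -- Summability part
  set Bnd : ℝ := (∑ j ∈ Finset.range (n+1), Complex.abs (R j * Q^j)) * (CC q (c*eb) * CC q (d*e))
    with hBnd
  have hbound : ∀ k : ℕ, Complex.abs (t ^ k / qPochC Q Q k * littleqJacobiC Q a b n (Q ^ k)
        * alSalamChiharaC Q c d x k) ≤ Bnd * (((k:ℝ)+1) * Complex.abs t ^ k) := by
    intro k
    rw [gterm k]
    calc Complex.abs (∑ j ∈ Finset.range (n+1), (R j * Q^j) * (uu Q c d x k * (w j)^k))
        ≤ ∑ j ∈ Finset.range (n+1), Complex.abs ((R j * Q^j) * (uu Q c d x k * (w j)^k)) := by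
          simpa [Complex.norm_eq_abs] using norm_sum_le (Finset.range (n+1))
            (fun j => (R j * Q^j) * (uu Q c d x k * (w j)^k))
      _ ≤ ∑ j ∈ Finset.range (n+1), Complex.abs (R j * Q^j)
            * ((((k:ℝ)+1) * (CC q (c*eb) * CC q (d*e))) * Complex.abs t ^ k) := by
          apply Finset.sum_le_sum
          intro j _
          rw [map_mul Complex.abs (R j * Q^j) (uu Q c d x k * (w j)^k),
            map_mul Complex.abs (uu Q c d x k) ((w j)^k), map_pow]
          have hu := uu_abs_le hq hq1 c d e eb x he hx hee heb k
          have hwp : Complex.abs (w j) ^ k ≤ Complex.abs t ^ k :=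
            pow_le_pow_left₀ (AbsoluteValue.nonneg _ _) (habsw j) k
          have h0r := AbsoluteValue.nonneg Complex.abs (R j * Q^j)
          have huw : Complex.abs (uu Q c d x k) * Complex.abs (w j) ^ k
              ≤ (((k:ℝ)+1) * (CC q (c*eb) * CC q (d*e))) * Complex.abs t ^ k := by
            apply mul_le_mul ?_ hwp (pow_nonneg (AbsoluteValue.nonneg _ _) k)
              (mul_nonneg (by positivity)
                (mul_nonneg (CC_pos q (c*eb)).le (CC_pos q (d*e)).le))
            exact_mod_cast hu
          exact mul_le_mul_of_nonneg_left huw h0r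
      _ = Bnd * (((k:ℝ)+1) * Complex.abs t ^ k) := by
          rw [hBnd, ← Finset.sum_mul]
          ring
  have hsummable : Summable (fun k : ℕ => Complex.abs
      (t ^ k / qPochC Q Q k * littleqJacobiC Q a b n (Q ^ k)
        * alSalamChiharaC Q c d x k)) := by
    have hgs : Summable (fun k : ℕ => Bnd * (((k:ℝ)+1) * Complex.abs t ^ k)) :=
      (summable_kp1_geom (AbsoluteValue.nonneg _ _) ht).mul_left _
    exact Summable.of_nonneg_of_le (fun k => AbsoluteValue.nonneg _ _) hbound hgs
  refine ⟨hsummable, ?_⟩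
  -- nonzeroness facts
  have hte : Complex.abs (t * e) < 1 := by rw [map_mul, hee, mul_one]; exact ht
  have hteb : Complex.abs (t * eb) < 1 := by rw [map_mul, heb, mul_one]; exact ht
  have htePoch : ∀ j : ℕ, qPochC Q (t*e) j ≠ 0 := fun j => qPoch_ne_zero hq hq1 hte j
  have htebPoch : ∀ j : ℕ, qPochC Q (t*eb) j ≠ 0 := fun j => qPoch_ne_zero hq hq1 hteb j
  have hteInf : qPochInfC Q (t*e) ≠ 0 := qPochInf_ne_zero hq hq1 hte
  have htebInf : qPochInfC Q (t*eb) ≠ 0 := qPochInf_ne_zero hq hq1 hteb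
  -- compute the sum
  have hsum1 : (∑' k : ℕ, t ^ k / qPochC Q Q k * littleqJacobiC Q a b n (Q ^ k)
        * alSalamChiharaC Q c d x k)
      = ∑ j ∈ Finset.range (n+1), (R j * Q^j) * (∑' k : ℕ, uu Q c d x k * (w j)^k) := by
    calc (∑' k : ℕ, t ^ k / qPochC Q Q k * littleqJacobiC Q a b n (Q ^ k)
        * alSalamChiharaC Q c d x k)
        = ∑' k : ℕ, ∑ j ∈ Finset.range (n+1), (R j * Q^j) * (uu Q c d x k * (w j)^k) := by
          exact tsum_congr gterm
      _ = ∑ j ∈ Finset.range (n+1), ∑' k : ℕ, (R j * Q^j) * (uu Q c d x k * (w j)^k) := by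
          exact Summable.tsum_finsetSum (fun j _ => hGsum j)
      _ = ∑ j ∈ Finset.range (n+1), (R j * Q^j) * (∑' k : ℕ, uu Q c d x k * (w j)^k) := by
          apply Finset.sum_congr rfl
          intro j _
          exact tsum_mul_left
  rw [hsum1]
  -- evaluate each j
  rw [Finset.mul_sum]
  apply Finset.sum_congr rfl
  intro j hj
  have hjn : j ≤ n := Nat.lt_succ_iff.1 (Finset.mem_range.1 hj)
  have hS := asc_gf hq hq1 c d e eb x he hx hee heb (hwlt j)
  -- qb evaluations
  have hwe : Complex.abs (w j * e) < 1 := by rw [map_mul, hee, mul_one]; exact hwlt j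
  have hweb : Complex.abs (w j * eb) < 1 := by rw [map_mul, heb, mul_one]; exact hwlt j
  have hcw : Complex.abs (c * eb * (w j * e)) < 1 := by
    have h1 : c * eb * (w j * e) = (t * c) * Q^j * (e * eb) := by rw [hw]; ring
    rw [h1, he, mul_one]
    calc Complex.abs ((t*c) * Q^j) = Complex.abs (t*c) * q^j := abs_term hq _ j
      _ ≤ Complex.abs (t*c) := by
          have h2 : q ^ j ≤ 1 := pow_le_one₀ hq.le hq1.le
          nlinarith [AbsoluteValue.nonneg Complex.abs (t*c), pow_nonneg hq.le j]
      _ < 1 := htc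
  have hdw : Complex.abs (d * e * (w j * eb)) < 1 := by
    have h1 : d * e * (w j * eb) = (t * d) * Q^j * (e * eb) := by rw [hw]; ring
    rw [h1, he, mul_one]
    calc Complex.abs ((t*d) * Q^j) = Complex.abs (t*d) * q^j := abs_term hq _ j
      _ ≤ Complex.abs (t*d) := by
          have h2 : q ^ j ≤ 1 := pow_le_one₀ hq.le hq1.le
          nlinarith [AbsoluteValue.nonneg Complex.abs (t*d), pow_nonneg hq.le j]
      _ < 1 := htd
  have hqb1 := qb_eq hq hq1 hwe hcw
  have hqb2 := qb_eq hq hq1 hweb hdw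
  -- rewrite arguments
  have harg1 : c * eb * (w j * e) = (t * c) * Q^j := by
    have h1 : c * eb * (w j * e) = (t * c) * Q^j * (e * eb) := by rw [hw]; ring
    rw [h1, he, mul_one]
  have harg2 : d * e * (w j * eb) = (t * d) * Q^j := by
    have h1 : d * e * (w j * eb) = (t * d) * Q^j * (e * eb) := by rw [hw]; ring
    rw [h1, he, mul_one]
  have harg3 : w j * e = (t * e) * Q^j := by rw [hw]; ring
  have harg4 : w j * eb = (t * eb) * Q^j := by rw [hw]; ring
  rw [harg1] at hqb1
  rw [harg2] at hqb2
  rw [harg3] at hqb1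
  rw [harg4] at hqb2
  -- shifts
  have hshift1 := qPochInf_shift hq hq1 htc j
  have hshift2 := qPochInf_shift hq hq1 htd j
  have hshift3 := qPochInf_shift hq hq1 hte j
  have hshift4 := qPochInf_shift hq hq1 hteb j
  have hteInfS : qPochInfC Q ((t*e) * Q^j) ≠ 0 := by
    apply qPochInf_ne_zero hq hq1
    calc Complex.abs ((t*e) * Q^j) = Complex.abs (t*e) * q^j := abs_term hq _ j
      _ ≤ Complex.abs (t*e) := by
          have h2 : q ^ j ≤ 1 := pow_le_one₀ hq.le hq1.le
          nlinarith [AbsoluteValue.nonneg Complex.abs (t*e), pow_nonneg hq.le j]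
      _ < 1 := hte
  have htebInfS : qPochInfC Q ((t*eb) * Q^j) ≠ 0 := by
    apply qPochInf_ne_zero hq hq1
    calc Complex.abs ((t*eb) * Q^j) = Complex.abs (t*eb) * q^j := abs_term hq _ j
      _ ≤ Complex.abs (t*eb) := by
          have h2 : q ^ j ≤ 1 := pow_le_one₀ hq.le hq1.le
          nlinarith [AbsoluteValue.nonneg Complex.abs (t*eb), pow_nonneg hq.le j]
      _ < 1 := hteb
  -- value of inner tsum
  have hSval : (∑' k : ℕ, uu Q c d x k * (w j)^k)
      * (qPochInfC Q (t*e) * qPochInfC Q (t*eb))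
      * (qPochC Q (t*c) j * qPochC Q (t*d) j)
      = qPochInfC Q (t*c) * qPochInfC Q (t*d) * (qPochC Q (t*e) j * qPochC Q (t*eb) j) := by
    rw [hS, harg3, harg4, hshift3, hshift4]
    calc qb Q (c*eb) ((t*e)*Q^j) * qb Q (d*e) ((t*eb)*Q^j)
          * (qPochC Q (t*e) j * qPochInfC Q ((t*e)*Q^j)
              * (qPochC Q (t*eb) j * qPochInfC Q ((t*eb)*Q^j)))
          * (qPochC Q (t*c) j * qPochC Q (t*d) j)
        = (qb Q (c*eb) ((t*e)*Q^j) * qPochInfC Q ((t*e)*Q^j))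
            * (qb Q (d*e) ((t*eb)*Q^j) * qPochInfC Q ((t*eb)*Q^j))
            * (qPochC Q (t*c) j * qPochC Q (t*d) j)
            * (qPochC Q (t*e) j * qPochC Q (t*eb) j) := by ring
      _ = qPochInfC Q ((t*c)*Q^j) * qPochInfC Q ((t*d)*Q^j)
            * (qPochC Q (t*c) j * qPochC Q (t*d) j)
            * (qPochC Q (t*e) j * qPochC Q (t*eb) j) := by rw [hqb1, hqb2]
      _ = (qPochC Q (t*c) j * qPochInfC Q ((t*c)*Q^j))
            * (qPochC Q (t*d) j * qPochInfC Q ((t*d)*Q^j))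
            * (qPochC Q (t*e) j * qPochC Q (t*eb) j) := by ring
      _ = qPochInfC Q (t*c) * qPochInfC Q (t*d) * (qPochC Q (t*e) j * qPochC Q (t*eb) j) := by
          rw [← hshift1, ← hshift2]
  -- final algebra
  have hD : qPochInfC Q (t*e) * qPochInfC Q (t*eb) ≠ 0 := mul_ne_zero hteInf htebInf
  have hcj := htc' j hjn
  have hdj := htd' j hjn
  have haj := haq j hjn
  have hqj := qPochQ_ne_zero hq hq1 j
  have hD2 : qPochC Q (a*Q) j * qPochC Q Q j ≠ 0 := mul_ne_zero haj hqj
  have hD3 : qPochC Q (a*Q) j * qPochC Q (t*c) j * qPochC Q (t*d) j * qPochC Q Q j ≠ 0 :=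
    mul_ne_zero (mul_ne_zero (mul_ne_zero haj hcj) hdj) hqj
  set N1 : ℂ := qPochC Q (Q ^ (-(n:ℤ))) j with hN1
  set N2 : ℂ := qPochC Q (a*b*Q^(n+1)) j with hN2
  set S : ℂ := ∑' k : ℕ, uu Q c d x k * (w j)^k with hSdef
  set DD : ℂ := (qPochC Q (a*Q) j * qPochC Q Q j) * (qPochInfC Q (t*e) * qPochInfC Q (t*eb))
      * (qPochC Q (t*c) j * qPochC Q (t*d) j) with hDD
  have hDDne : DD ≠ 0 := mul_ne_zero (mul_ne_zero hD2 hD) (mul_ne_zero hcj hdj)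
  apply mul_right_cancel₀ hDDne
  have G1 : R j * (qPochC Q (a*Q) j * qPochC Q Q j) = N1 * N2 := by
    rw [hR]
    exact div_mul_cancel₀ _ hD2
  have G2 : qPochInfC Q (t*c) * qPochInfC Q (t*d) / (qPochInfC Q (t*e) * qPochInfC Q (t*eb))
      * (qPochInfC Q (t*e) * qPochInfC Q (t*eb)) = qPochInfC Q (t*c) * qPochInfC Q (t*d) :=
    div_mul_cancel₀ _ hD
  have G3 : (N1 * N2 * qPochC Q (t*e) j * qPochC Q (t*eb) j
        / (qPochC Q (a*Q) j * qPochC Q (t*c) j * qPochC Q (t*d) j * qPochC Q Q j) * Q^j)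
      * (qPochC Q (a*Q) j * qPochC Q (t*c) j * qPochC Q (t*d) j * qPochC Q Q j)
      = N1 * N2 * qPochC Q (t*e) j * qPochC Q (t*eb) j * Q^j := by
    rw [div_mul_eq_mul_div, div_mul_cancel₀ _ hD3]
  calc R j * Q^j * S * DD
      = (R j * (qPochC Q (a*Q) j * qPochC Q Q j))
          * (S * (qPochInfC Q (t*e) * qPochInfC Q (t*eb))
              * (qPochC Q (t*c) j * qPochC Q (t*d) j)) * Q^j := by rw [hDD]; ring
    _ = (N1 * N2)
          * (qPochInfC Q (t*c) * qPochInfC Q (t*d) * (qPochC Q (t*e) j * qPochC Q (t*eb) j))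
          * Q^j := by rw [G1, hSval]
    _ = (qPochInfC Q (t*c) * qPochInfC Q (t*d))
          * (N1 * N2 * qPochC Q (t*e) j * qPochC Q (t*eb) j * Q^j) := by ring
    _ = (qPochInfC Q (t*c) * qPochInfC Q (t*d) / (qPochInfC Q (t*e) * qPochInfC Q (t*eb))
          * (qPochInfC Q (t*e) * qPochInfC Q (t*eb)))
          * ((N1 * N2 * qPochC Q (t*e) j * qPochC Q (t*eb) j
              / (qPochC Q (a*Q) j * qPochC Q (t*c) j * qPochC Q (t*d) j * qPochC Q Q j) * Q^j)
            * (qPochC Q (a*Q) j * qPochC Q (t*c) j * qPochC Q (t*d) j * qPochC Q Q j)) := by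
        rw [G2, G3]
    _ = qPochInfC Q (t*c) * qPochInfC Q (t*d) / (qPochInfC Q (t*e) * qPochInfC Q (t*eb))
          * (N1 * N2 * qPochC Q (t*e) j * qPochC Q (t*eb) j
              / (qPochC Q (a*Q) j * qPochC Q (t*c) j * qPochC Q (t*d) j * qPochC Q Q j) * Q^j)
          * DD := by rw [hDD]; ring
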